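/- The operator T_λ maps K into K, is continuous on K, and maps bounded subsets of K to relatively compact subsets of X (i.e., T_λ : K → K is a compact continuous operator). -/

import Mathlib

open Set Filter

/-- The Banach space `X = C([0,1]) × C([0,1])`. -/
abbrev XCM := C(Set.Icc (0:ℝ) 1, ℝ) × C(Set.Icc (0:ℝ) 1, ℝ)

/-- The cone `K ⊆ X`:
`K = {(v₁,v₂) : vᵢ ≥ 0 and min_{1/4 ≤ t ≤ 3/4} vᵢ(t) ≥ (1/4)‖vᵢ‖_∞, i = 1,2}`. -/
def coneCM : Set XCM :=
  {p | (∀ t, 0 ≤ p.1 t) ∧ (∀ t, 0 ≤ p.2 t) ∧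
       (∀ t : Set.Icc (0:ℝ) 1, 1/4 ≤ (t:ℝ) → (t:ℝ) ≤ 3/4 → (1/4) * ‖p.1‖ ≤ p.1 t) ∧
       (∀ t : Set.Icc (0:ℝ) 1, 1/4 ≤ (t:ℝ) → (t:ℝ) ≤ 3/4 → (1/4) * ‖p.2‖ ≤ p.2 t)}

/-- Extension of a continuous function on `[0,1]` to `ℝ` by projection onto `[0,1]`. -/
noncomputable def extCM (v : C(Set.Icc (0:ℝ) 1, ℝ)) : ℝ → ℝ :=
  fun t => v (Set.projIcc 0 1 zero_le_one t)

/-! ### Auxiliary machinery -/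

section aux
open MeasureTheory intervalIntegral BoundedContinuousFunction

/-- The basic scalar operator: `opFun c e u r = ∫_r^1 (c ∫_0^s u(τ) dτ)^e ds`. -/
noncomputable def opFun (c e : ℝ) (u : ℝ → ℝ) : ℝ → ℝ :=
  fun r => ∫ s in r..1, (c * ∫ τ in (0:ℝ)..s, u τ) ^ e

lemma opFun_continuousOn (c : ℝ) {e : ℝ} (he : 0 < e) (u : ℝ → ℝ) :
    ContinuousOn (opFun c e u) (Icc (0:ℝ) 1) := by
  set P : ℝ → ℝ := fun s => ∫ τ in (0:ℝ)..s, u τ with hP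
  set G : ℝ → ℝ := fun s => (c * P s) ^ e with hG
  have hGopp : opFun c e u = fun r => ∫ s in r..1, G s := rfl
  by_cases hint : IntegrableOn G (Icc (0:ℝ) 1) volume
  · rw [hGopp]
    have := intervalIntegral.continuousOn_primitive_interval_left
      (a := (0:ℝ)) (b := 1) (μ := volume) (f := G) (by
        rwa [uIcc_of_le (zero_le_one)])
    rwa [uIcc_of_le (zero_le_one)] at this
  · set A : Set ℝ := {s | s ∈ Icc (0:ℝ) 1 ∧ IntervalIntegrable u volume 0 s} with hA
    have h0A : (0:ℝ) ∈ A := ⟨⟨le_rfl, zero_le_one⟩, by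
      rw [intervalIntegrable_iff]; simp⟩
    have hAsub : A ⊆ Icc (0:ℝ) 1 := fun s hs => hs.1
    have hbdd : BddAbove A := BddAbove.mono hAsub bddAbove_Icc
    set a := sSup A with ha
    have ha0 : 0 ≤ a := le_csSup hbdd h0A
    have ha1 : a ≤ 1 := csSup_le ⟨0, h0A⟩ fun s hs => hs.1.2
    have hPzero : ∀ s, a < s → s ≤ 1 → P s = 0 := by
      intro s hs hs1
      apply intervalIntegral.integral_undef
      intro hcon
      exact absurd (le_csSup hbdd ⟨⟨le_trans ha0 hs.le, hs1⟩, hcon⟩) (not_le.2 hs)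
    have hGzero : ∀ s, a < s → s ≤ 1 → G s = 0 := by
      intro s hs hs1
      simp [hG, hPzero s hs hs1, Real.zero_rpow he.ne']
    have key : ∀ r ∈ Icc (0:ℝ) 1, opFun c e u r = 0 := by
      intro r hr
      show (∫ s in r..1, G s) = 0
      by_cases hra : a ≤ r
      · rw [intervalIntegral.integral_of_le hr.2]
        have hae : ∀ᵐ s ∂(volume.restrict (Ioc r 1)), G s = 0 := by
          have hane : ∀ᵐ (s : ℝ) ∂(volume.restrict (Ioc r 1)), s ≠ a := by
            refine ae_restrict_of_ae ?_
            refine ae_iff.mpr ?_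
            have : {x : ℝ | ¬ x ≠ a} = {a} := by ext x; simp
            rw [this]; simp
          filter_upwards [hane, ae_restrict_mem measurableSet_Ioc] with s hsa hs
          exact hGzero s (lt_of_le_of_ne (le_trans hra hs.1.le) (Ne.symm hsa)) hs.2
        exact MeasureTheory.integral_eq_zero_of_ae hae
      · push_neg at hra
        apply intervalIntegral.integral_undef
        intro hcon
        obtain ⟨s', hs'A, hrs'⟩ := exists_lt_of_lt_csSup ⟨0, h0A⟩ hra
        have hPcont : ContinuousOn P (Icc (0:ℝ) s') := by
          have : IntegrableOn u (Icc (0:ℝ) s') volume :=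
            (intervalIntegrable_iff_integrableOn_Icc_of_le hs'A.1.1).mp hs'A.2
          have := intervalIntegral.continuousOn_primitive_interval
            (a := (0:ℝ)) (b := s') (μ := volume) (f := u) (by rwa [uIcc_of_le hs'A.1.1])
          rwa [uIcc_of_le hs'A.1.1] at this
        have hGcont : ContinuousOn G (Icc (0:ℝ) r) := by
          have h1 : ContinuousOn (fun s => c * P s) (Icc (0:ℝ) r) :=
            continuousOn_const.mul (hPcont.mono (Icc_subset_Icc le_rfl hrs'.le))
          exact (Real.continuous_rpow_const he.le).comp_continuousOn h1
        have hG1 : IntegrableOn G (Icc (0:ℝ) r) volume := hGcont.integrableOn_Icc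
        have hG2 : IntegrableOn G (Icc r 1) volume :=
          (intervalIntegrable_iff_integrableOn_Icc_of_le hr.2).mp hcon
        exact hint (((hG1.union hG2).mono_set (fun x hx => by
          rcases le_total x r with h | h
          · exact Or.inl ⟨hx.1, h⟩
          · exact Or.inr ⟨h, hx.2⟩)))
    exact continuousOn_const.congr key

variable {c e : ℝ} {u : ℝ → ℝ}

lemma P_nonneg (hu0 : ∀ τ, 0 ≤ τ → 0 ≤ u τ) :
    ∀ s, 0 ≤ s → 0 ≤ ∫ τ in (0:ℝ)..s, u τ := fun s hs =>
  intervalIntegral.integral_nonneg hs (fun τ hτ => hu0 τ hτ.1)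

lemma P_mono (hu : Continuous u) (hu0 : ∀ τ, 0 ≤ τ → 0 ≤ u τ) :
    ∀ s t : ℝ, 0 ≤ s → s ≤ t →
    (∫ τ in (0:ℝ)..s, u τ) ≤ ∫ τ in (0:ℝ)..t, u τ := by
  intro s t h0s hst
  have h1 : (∫ τ in (0:ℝ)..s, u τ) + ∫ τ in s..t, u τ = ∫ τ in (0:ℝ)..t, u τ :=
    intervalIntegral.integral_add_adjacent_intervals (hu.intervalIntegrable _ _)
      (hu.intervalIntegrable _ _)
  nlinarith [intervalIntegral.integral_nonneg (μ := volume) hst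
    (fun τ hτ => hu0 τ (le_trans h0s hτ.1))]

lemma G_nonneg (hc : 0 ≤ c) (hu0 : ∀ τ, 0 ≤ τ → 0 ≤ u τ) :
    ∀ s, 0 ≤ s → 0 ≤ (c * ∫ τ in (0:ℝ)..s, u τ) ^ e := fun s hs =>
  Real.rpow_nonneg (mul_nonneg hc (P_nonneg hu0 s hs)) e

lemma G_mono (hc : 0 ≤ c) (he : 0 < e) (hu : Continuous u) (hu0 : ∀ τ, 0 ≤ τ → 0 ≤ u τ) :
    ∀ s t : ℝ, 0 ≤ s → s ≤ t →
    (c * ∫ τ in (0:ℝ)..s, u τ) ^ e ≤ (c * ∫ τ in (0:ℝ)..t, u τ) ^ e := fun s t h0s hst =>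
  Real.rpow_le_rpow (mul_nonneg hc (P_nonneg hu0 s h0s))
    (mul_le_mul_of_nonneg_left (P_mono hu hu0 s t h0s hst) hc) he.le

lemma G_cont (he : 0 < e) (hu : Continuous u) :
    Continuous (fun s => (c * ∫ τ in (0:ℝ)..s, u τ) ^ e) := by
  apply (Real.continuous_rpow_const he.le).comp
  exact continuous_const.mul
    (intervalIntegral.continuous_primitive (fun a b => hu.intervalIntegrable a b) 0)

lemma opFun_split (he : 0 < e) (hu : Continuous u) {r : ℝ} (hr : r ∈ Icc (0:ℝ) 1) :
    opFun c e u 0 = (∫ s in (0:ℝ)..r, (c * ∫ τ in (0:ℝ)..s, u τ) ^ e) + opFun c e u r :=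
  (intervalIntegral.integral_add_adjacent_intervals
    ((G_cont he hu).intervalIntegrable _ _) ((G_cont he hu).intervalIntegrable _ _)).symm

lemma opFun_nonneg (hc : 0 ≤ c) (hu0 : ∀ τ, 0 ≤ τ → 0 ≤ u τ) :
    ∀ r ∈ Icc (0:ℝ) 1, 0 ≤ opFun c e u r := fun r hr =>
  intervalIntegral.integral_nonneg hr.2 (fun s hs => G_nonneg hc hu0 s (le_trans hr.1 hs.1))

lemma opFun_le (hc : 0 ≤ c) (he : 0 < e) (hu : Continuous u) (hu0 : ∀ τ, 0 ≤ τ → 0 ≤ u τ) :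
    ∀ r ∈ Icc (0:ℝ) 1, opFun c e u r ≤ opFun c e u 0 := by
  intro r hr
  rw [opFun_split he hu hr]
  nlinarith [intervalIntegral.integral_nonneg (μ := volume) hr.1
    (fun s hs => G_nonneg (e := e) hc hu0 s hs.1)]

lemma opFun_quarter (hc : 0 ≤ c) (he : 0 < e) (hu : Continuous u)
    (hu0 : ∀ τ, 0 ≤ τ → 0 ≤ u τ) :
    ∀ t ∈ Icc (0:ℝ) 1, 1/4 ≤ t → t ≤ 3/4 →
    (1/4) * opFun c e u 0 ≤ opFun c e u t := by
  intro t ht ht1 ht2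
  set G : ℝ → ℝ := fun s => (c * ∫ τ in (0:ℝ)..s, u τ) ^ e with hGdef
  have h1 : (∫ s in (0:ℝ)..t, G s) ≤ t * G t := by
    have := intervalIntegral.integral_mono_on (μ := volume) ht.1
      ((G_cont he hu).intervalIntegrable _ _) (intervalIntegrable_const)
      (fun s hs => G_mono hc he hu hu0 s t hs.1 hs.2)
    simpa using this
  have h2 : (1 - t) * G t ≤ ∫ s in t..1, G s := by
    have := intervalIntegral.integral_mono_on (μ := volume) ht.2
      (intervalIntegrable_const) ((G_cont he hu).intervalIntegrable _ _)
      (fun s hs => G_mono hc he hu hu0 t s ht.1 hs.1)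
    simpa using this
  have hGt : 0 ≤ G t := G_nonneg hc hu0 t ht.1
  have hsplit := opFun_split (c := c) (u := u) he hu ht
  have hop : opFun c e u t = ∫ s in t..1, G s := rfl
  have h3 : (∫ s in (0:ℝ)..t, G s) ≤ 3 * opFun c e u t := by
    rw [hop]; nlinarith
  linarith [hsplit, h3, intervalIntegral.integral_nonneg (μ := volume) ht.2
    (fun s hs => G_nonneg (e := e) hc hu0 s (le_trans ht.1 hs.1))]

lemma opFun_bounds (hc : 0 ≤ c) (he : 0 < e) (hu : Continuous u)
    (hu0 : ∀ τ, 0 ≤ τ → 0 ≤ u τ) {D : ℝ} (hD : ∀ τ ∈ Icc (0:ℝ) 1, u τ ≤ D) :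
    (∀ r ∈ Icc (0:ℝ) 1, |opFun c e u r| ≤ (c * D) ^ e) ∧
    (∀ r ∈ Icc (0:ℝ) 1, ∀ r' ∈ Icc (0:ℝ) 1,
      |opFun c e u r - opFun c e u r'| ≤ (c * D) ^ e * |r - r'|) := by
  have hD0 : 0 ≤ D := le_trans (hu0 0 le_rfl) (hD 0 ⟨le_rfl, zero_le_one⟩)
  have hGb : ∀ s ∈ Icc (0:ℝ) 1, ‖(c * ∫ τ in (0:ℝ)..s, u τ) ^ e‖ ≤ (c * D) ^ e := by
    intro s hs
    have hPb : (∫ τ in (0:ℝ)..s, u τ) ≤ D := by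
      calc (∫ τ in (0:ℝ)..s, u τ) ≤ ∫ τ in (0:ℝ)..s, D := by
            apply intervalIntegral.integral_mono_on hs.1 (hu.intervalIntegrable _ _)
              intervalIntegrable_const
            intro τ hτ; exact hD τ ⟨hτ.1, le_trans hτ.2 hs.2⟩
      _ = s * D := by simp
      _ ≤ D := by nlinarith [hs.1, hs.2]
    rw [Real.norm_eq_abs, abs_of_nonneg (G_nonneg hc hu0 s hs.1)]
    exact Real.rpow_le_rpow (mul_nonneg hc (P_nonneg hu0 s hs.1))
      (mul_le_mul_of_nonneg_left hPb hc) he.le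
  constructor
  · intro r hr
    rw [← Real.norm_eq_abs]
    calc ‖opFun c e u r‖ ≤ (c*D)^e * |1 - r| := by
          apply intervalIntegral.norm_integral_le_of_norm_le_const
          intro s hs
          rw [uIoc_of_le hr.2] at hs
          exact hGb s ⟨le_trans hr.1 hs.1.le, hs.2⟩
    _ ≤ (c*D)^e * 1 := by
          apply mul_le_mul_of_nonneg_left _ (Real.rpow_nonneg (mul_nonneg hc hD0) e)
          rw [abs_of_nonneg (by linarith [hr.1, hr.2] : (0:ℝ) ≤ 1 - r)]
          linarith [hr.1]
    _ = (c*D)^e := mul_one _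
  · intro r hr r' hr'
    have hsplit : opFun c e u r' - opFun c e u r
        = ∫ s in r'..r, (c * ∫ τ in (0:ℝ)..s, u τ) ^ e := by
      have := intervalIntegral.integral_add_adjacent_intervals (a := r') (b := r) (c := 1)
        ((G_cont (c := c) he hu).intervalIntegrable (μ := volume) r' r)
        ((G_cont (c := c) he hu).intervalIntegrable (μ := volume) r 1)
      unfold opFun; linarith
    rw [abs_sub_comm, ← Real.norm_eq_abs, hsplit]
    have hb := intervalIntegral.norm_integral_le_of_norm_le_const (a := r') (b := r)
      (C := (c*D)^e) (f := fun s => (c * ∫ τ in (0:ℝ)..s, u τ) ^ e) ?_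
    · calc _ ≤ (c*D)^e * |r - r'| := hb
      _ = (c*D)^e * |r - r'| := rfl
      _ ≤ _ := by rw [abs_sub_comm]
    · intro s hs
      have h1 : min r' r < s := hs.1
      have h2 : s ≤ max r' r := hs.2
      exact hGb s ⟨le_trans (le_min hr'.1 hr.1) h1.le,
        le_trans h2 (max_le hr'.2 hr.2)⟩

lemma extCM_continuous (v : C(Set.Icc (0:ℝ) 1, ℝ)) : Continuous (extCM v) :=
  v.continuous.comp continuous_projIcc

lemma extCM_dist_le (v w : C(Set.Icc (0:ℝ) 1, ℝ)) (τ : ℝ) :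
    dist (extCM v τ) (extCM w τ) ≤ dist v w :=
  ContinuousMap.dist_apply_le_dist _

lemma extCM_abs_le (v : C(Set.Icc (0:ℝ) 1, ℝ)) (τ : ℝ) : |extCM v τ| ≤ ‖v‖ := by
  rw [← Real.norm_eq_abs]; exact ContinuousMap.norm_coe_le_norm v _

/-- The one-component operator, as a continuous map on `[0,1]`. -/
noncomputable def opCM (c : ℝ) {e : ℝ} (he : 0 < e) (u : ℝ → ℝ) : C(Set.Icc (0:ℝ) 1, ℝ) :=
  ⟨(Set.Icc (0:ℝ) 1).restrict (opFun c e u), (opFun_continuousOn c he u).restrict⟩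

/-- The inner integrand. -/
noncomputable def uAux (F : ℝ → ℝ) (Nn : ℕ) (v : C(Set.Icc (0:ℝ) 1, ℝ)) : ℝ → ℝ :=
  fun τ => (Nn:ℝ) * τ ^ (Nn - 1) * F (extCM v τ)

lemma uAux_cont {F : ℝ → ℝ} (hFc : ContinuousOn F (Ici 0)) (Nn : ℕ)
    {v : C(Set.Icc (0:ℝ) 1, ℝ)} (hv : ∀ t, 0 ≤ v t) : Continuous (uAux F Nn v) :=
  (continuous_const.mul (continuous_pow _)).mul
    (hFc.comp_continuous (extCM_continuous v) (fun _ => mem_Ici.mpr (hv _)))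

lemma uAux_nonneg {F : ℝ → ℝ} (hF0 : ∀ x, 0 ≤ x → 0 ≤ F x) (Nn : ℕ)
    {v : C(Set.Icc (0:ℝ) 1, ℝ)} (hv : ∀ t, 0 ≤ v t) :
    ∀ τ, 0 ≤ τ → 0 ≤ uAux F Nn v τ := fun τ hτ =>
  mul_nonneg (mul_nonneg (Nat.cast_nonneg _) (pow_nonneg hτ _)) (hF0 _ (hv _))

lemma uAux_bound {F : ℝ → ℝ} (Nn : ℕ) {v : C(Set.Icc (0:ℝ) 1, ℝ)} {M Cf : ℝ}
    (hCf : ∀ x ∈ Icc (0:ℝ) M, ‖F x‖ ≤ Cf)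
    (hvM : ∀ τ, extCM v τ ∈ Icc (0:ℝ) M) :
    ∀ τ ∈ Icc (0:ℝ) 1, |uAux F Nn v τ| ≤ Nn * Cf := by
  intro τ hτ
  have h1 : |(Nn:ℝ) * τ ^ (Nn-1)| ≤ Nn := by
    rw [abs_of_nonneg (mul_nonneg (Nat.cast_nonneg _) (pow_nonneg hτ.1 _))]
    calc (Nn:ℝ) * τ ^ (Nn-1) ≤ Nn * 1 :=
          mul_le_mul_of_nonneg_left (pow_le_one₀ hτ.1 hτ.2) (Nat.cast_nonneg _)
    _ = Nn := mul_one _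
  have h2 : |F (extCM v τ)| ≤ Cf := by
    rw [← Real.norm_eq_abs]; exact hCf _ (hvM τ)
  calc |uAux F Nn v τ| = |(Nn:ℝ) * τ ^ (Nn-1)| * |F (extCM v τ)| := abs_mul _ _
  _ ≤ Nn * Cf := mul_le_mul h1 h2 (abs_nonneg _) (Nat.cast_nonneg _)

lemma opS_contOn {c e : ℝ} (hc : 0 < c) (he : 0 < e) {F : ℝ → ℝ}
    (hFc : ContinuousOn F (Ici 0)) (hF0 : ∀ x, 0 ≤ x → 0 ≤ F x) (Nn : ℕ) :
    ContinuousOn (fun v => opCM c he (uAux F Nn v))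
      {v : C(Set.Icc (0:ℝ) 1, ℝ) | ∀ t, 0 ≤ v t} := by
  intro v₀ hv₀
  rw [Metric.continuousWithinAt_iff]
  intro ε hε
  set M : ℝ := ‖v₀‖ + 1 with hM
  have hM0 : 0 ≤ M := by positivity
  obtain ⟨Cf, hCf⟩ := (isCompact_Icc (a := (0:ℝ)) (b := M)).exists_bound_of_continuousOn
    (hFc.mono (fun x hx => hx.1))
  have hCf0 : 0 ≤ Cf := le_trans (norm_nonneg (F 0)) (hCf 0 ⟨le_rfl, hM0⟩)
  have hUC2 : UniformContinuousOn (fun x : ℝ => x ^ e) (Icc 0 (c*(Nn*Cf))) :=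
    isCompact_Icc.uniformContinuousOn_of_continuous
      (Real.continuous_rpow_const he.le).continuousOn
  obtain ⟨δ₂, hδ₂, h2⟩ := Metric.uniformContinuousOn_iff.mp hUC2 (ε/2) (by positivity)
  set ε₁ : ℝ := δ₂ / ((c+1)*(Nn+1)) with hε₁def
  have hε₁ : 0 < ε₁ := by positivity
  have hUC1 : UniformContinuousOn F (Icc 0 M) :=
    isCompact_Icc.uniformContinuousOn_of_continuous (hFc.mono (fun x hx => hx.1))
  obtain ⟨δ₁, hδ₁, h1⟩ := Metric.uniformContinuousOn_iff.mp hUC1 ε₁ hε₁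
  refine ⟨min δ₁ 1, by positivity, ?_⟩
  intro v hv hdist
  have hv : ∀ t, 0 ≤ v t := hv
  have hw0 : ∀ τ, 0 ≤ extCM v τ := fun τ => hv _
  have hw0' : ∀ τ, 0 ≤ extCM v₀ τ := fun τ => hv₀ _
  have hdist1 : dist v v₀ < 1 := lt_of_lt_of_le hdist (min_le_right _ _)
  have hdistδ : dist v v₀ < δ₁ := lt_of_lt_of_le hdist (min_le_left _ _)
  have hwM : ∀ τ, extCM v τ ∈ Icc (0:ℝ) M := by
    intro τ
    refine ⟨hw0 τ, ?_⟩
    have h3 := extCM_dist_le v v₀ τ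
    rw [Real.dist_eq] at h3
    have h4 := extCM_abs_le v₀ τ
    have := abs_sub_abs_le_abs_sub (extCM v τ) (extCM v₀ τ)
    have h5 : |extCM v τ| ≤ ‖v₀‖ + 1 := by linarith [le_of_lt (lt_of_le_of_lt h3 hdist1)]
    calc extCM v τ ≤ |extCM v τ| := le_abs_self _
    _ ≤ M := h5
  have hwM' : ∀ τ, extCM v₀ τ ∈ Icc (0:ℝ) M := by
    intro τ
    exact ⟨hw0' τ, le_trans (le_trans (le_abs_self _) (extCM_abs_le v₀ τ)) (by linarith)⟩
  have hFd : ∀ τ, |F (extCM v τ) - F (extCM v₀ τ)| ≤ ε₁ := by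
    intro τ
    have := h1 _ (hwM τ) _ (hwM' τ) (lt_of_le_of_lt (extCM_dist_le v v₀ τ) hdistδ)
    rw [Real.dist_eq] at this
    exact this.le
  have hPd : ∀ s ∈ Icc (0:ℝ) 1,
      |(∫ τ in (0:ℝ)..s, uAux F Nn v τ) - ∫ τ in (0:ℝ)..s, uAux F Nn v₀ τ| ≤ Nn * ε₁ := by
    intro s hs
    rw [← intervalIntegral.integral_sub ((uAux_cont hFc Nn hv).intervalIntegrable _ _)
      ((uAux_cont hFc Nn hv₀).intervalIntegrable _ _), ← Real.norm_eq_abs]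
    calc ‖∫ τ in (0:ℝ)..s, (uAux F Nn v τ - uAux F Nn v₀ τ)‖ ≤ (Nn * ε₁) * |s - 0| := by
          apply intervalIntegral.norm_integral_le_of_norm_le_const
          intro τ hτ
          rw [uIoc_of_le hs.1] at hτ
          have hτ1 : τ ∈ Icc (0:ℝ) 1 := ⟨hτ.1.le, le_trans hτ.2 hs.2⟩
          have : uAux F Nn v τ - uAux F Nn v₀ τ
              = ((Nn:ℝ) * τ ^ (Nn-1)) * (F (extCM v τ) - F (extCM v₀ τ)) := by
            unfold uAux; ring
          rw [Real.norm_eq_abs, this, abs_mul]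
          apply mul_le_mul _ (hFd τ) (abs_nonneg _) (Nat.cast_nonneg _)
          rw [abs_of_nonneg (mul_nonneg (Nat.cast_nonneg _) (pow_nonneg hτ1.1 _))]
          calc (Nn:ℝ) * τ ^ (Nn-1) ≤ Nn * 1 :=
                mul_le_mul_of_nonneg_left (pow_le_one₀ hτ1.1 hτ1.2) (Nat.cast_nonneg _)
          _ = Nn := mul_one _
    _ ≤ Nn * ε₁ := by
          rw [sub_zero, abs_of_nonneg hs.1]
          have h0 : (0:ℝ) ≤ Nn * ε₁ := by positivity
          nlinarith [h0, hs.2]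
  have hPb : ∀ (w : C(Set.Icc (0:ℝ) 1, ℝ)), (∀ t, 0 ≤ w t) →
      (∀ τ, extCM w τ ∈ Icc (0:ℝ) M) → ∀ s ∈ Icc (0:ℝ) 1,
      (∫ τ in (0:ℝ)..s, uAux F Nn w τ) ∈ Icc (0:ℝ) (Nn * Cf) := by
    intro w hw hwMem s hs
    constructor
    · exact intervalIntegral.integral_nonneg hs.1
        (fun τ hτ => uAux_nonneg hF0 Nn hw τ hτ.1)
    · have hb : ‖∫ τ in (0:ℝ)..s, uAux F Nn w τ‖ ≤ (Nn * Cf) * |s - 0| := by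
        apply intervalIntegral.norm_integral_le_of_norm_le_const
        intro τ hτ
        rw [uIoc_of_le hs.1] at hτ
        rw [Real.norm_eq_abs]
        exact uAux_bound Nn hCf hwMem τ ⟨hτ.1.le, le_trans hτ.2 hs.2⟩
      rw [Real.norm_eq_abs] at hb
      calc (∫ τ in (0:ℝ)..s, uAux F Nn w τ) ≤ |∫ τ in (0:ℝ)..s, uAux F Nn w τ| :=
            le_abs_self _
      _ ≤ (Nn * Cf) * |s - 0| := hb
      _ ≤ Nn * Cf := by
            rw [sub_zero, abs_of_nonneg hs.1]
            have h0 : (0:ℝ) ≤ Nn * Cf := by positivity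
            nlinarith [h0, hs.2]
  have hGd : ∀ s ∈ Icc (0:ℝ) 1,
      |(c * ∫ τ in (0:ℝ)..s, uAux F Nn v τ) ^ e
        - (c * ∫ τ in (0:ℝ)..s, uAux F Nn v₀ τ) ^ e| ≤ ε/2 := by
    intro s hs
    have hx : c * (∫ τ in (0:ℝ)..s, uAux F Nn v τ) ∈ Icc (0:ℝ) (c*(Nn*Cf)) := by
      obtain ⟨ha, hb⟩ := hPb v hv hwM s hs
      exact ⟨mul_nonneg hc.le ha, mul_le_mul_of_nonneg_left hb hc.le⟩
    have hy : c * (∫ τ in (0:ℝ)..s, uAux F Nn v₀ τ) ∈ Icc (0:ℝ) (c*(Nn*Cf)) := by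
      obtain ⟨ha, hb⟩ := hPb v₀ hv₀ hwM' s hs
      exact ⟨mul_nonneg hc.le ha, mul_le_mul_of_nonneg_left hb hc.le⟩
    have hlt : dist (c * ∫ τ in (0:ℝ)..s, uAux F Nn v τ)
        (c * ∫ τ in (0:ℝ)..s, uAux F Nn v₀ τ) < δ₂ := by
      rw [Real.dist_eq, ← mul_sub, abs_mul, abs_of_nonneg hc.le]
      have hkey : c * (Nn * ε₁) < δ₂ := by
        have hδeq : ((c+1)*(Nn+1)) * ε₁ = δ₂ := by
          rw [hε₁def]; field_simp
        nlinarith [hε₁, hc, Nat.cast_nonneg (α := ℝ) Nn]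
      calc c * |(∫ τ in (0:ℝ)..s, uAux F Nn v τ) - ∫ τ in (0:ℝ)..s, uAux F Nn v₀ τ|
          ≤ c * (Nn * ε₁) := mul_le_mul_of_nonneg_left (hPd s hs) hc.le
      _ < δ₂ := hkey
    have := h2 _ hx _ hy hlt
    rw [Real.dist_eq] at this
    exact this.le
  have hfinal : dist (opCM c he (uAux F Nn v)) (opCM c he (uAux F Nn v₀)) ≤ ε/2 := by
    rw [ContinuousMap.dist_le (by positivity)]
    intro x
    show dist (opFun c e (uAux F Nn v) ↑x) (opFun c e (uAux F Nn v₀) ↑x) ≤ ε/2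
    rw [Real.dist_eq]
    have hGint : ∀ (w : C(Set.Icc (0:ℝ) 1, ℝ)), (∀ t, 0 ≤ w t) →
        IntervalIntegrable (fun s => (c * ∫ τ in (0:ℝ)..s, uAux F Nn w τ) ^ e)
          volume ↑x 1 := by
      intro w hw
      apply Continuous.intervalIntegrable
      apply (Real.continuous_rpow_const he.le).comp
      exact continuous_const.mul (intervalIntegral.continuous_primitive
        (fun a b => (uAux_cont hFc Nn hw).intervalIntegrable a b) 0)
    have hxmem : (x:ℝ) ∈ Icc (0:ℝ) 1 := x.2
    unfold opFun
    rw [← intervalIntegral.integral_sub (hGint v hv) (hGint v₀ hv₀), ← Real.norm_eq_abs]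
    calc ‖∫ s in (x:ℝ)..1, ((c * ∫ τ in (0:ℝ)..s, uAux F Nn v τ) ^ e
          - (c * ∫ τ in (0:ℝ)..s, uAux F Nn v₀ τ) ^ e)‖ ≤ (ε/2) * |1 - (x:ℝ)| := by
          apply intervalIntegral.norm_integral_le_of_norm_le_const
          intro s hsi
          rw [uIoc_of_le hxmem.2] at hsi
          rw [Real.norm_eq_abs]
          exact hGd s ⟨le_trans hxmem.1 hsi.1.le, hsi.2⟩
    _ ≤ (ε/2) * 1 := by
          apply mul_le_mul_of_nonneg_left _ (by positivity)
          rw [abs_of_nonneg (by linarith [hxmem.1, hxmem.2] : (0:ℝ) ≤ 1 - (x:ℝ))]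
          linarith [hxmem.1]
    _ = ε/2 := mul_one _
  linarith [hfinal, hε]

/-- Arzelà–Ascoli for uniformly bounded, uniformly Lipschitz families in `C([0,1],ℝ)`. -/
lemma isCompact_closure_lipset (L C : ℝ) :
    IsCompact (closure {h : C(Set.Icc (0:ℝ) 1, ℝ) |
      (∀ x, ‖h x‖ ≤ C) ∧ ∀ x y, dist (h x) (h y) ≤ L * dist x y}) := by
  set A : Set C(Set.Icc (0:ℝ) 1, ℝ) := {h |
      (∀ x, ‖h x‖ ≤ C) ∧ ∀ x y, dist (h x) (h y) ≤ L * dist x y} with hA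
  set eH : C(Set.Icc (0:ℝ) 1, ℝ) ≃ₜ (Set.Icc (0:ℝ) 1 →ᵇ ℝ) :=
    (ContinuousMap.isometryEquivBoundedOfCompact (Set.Icc (0:ℝ) 1) ℝ).toHomeomorph with heH
  have happ : ∀ (h : C(Set.Icc (0:ℝ) 1, ℝ)) x, (eH h) x = h x := fun h x => rfl
  have key : IsCompact (closure (eH '' A)) := by
    apply BoundedContinuousFunction.arzela_ascoli (Icc (-C) C) isCompact_Icc
    · rintro F x ⟨h, hh, rfl⟩
      rw [happ]
      have := hh.1 x
      rw [Real.norm_eq_abs, abs_le] at this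
      exact ⟨this.1, this.2⟩
    · apply Metric.equicontinuous_of_continuity_modulus (fun d => |L| * d)
      · have : Tendsto (fun d : ℝ => |L| * d) (nhds 0) (nhds (|L| * 0)) :=
          (tendsto_const_nhds.mul tendsto_id)
        simpa using this
      · rintro x y ⟨F, hF⟩
        obtain ⟨h, hh, rfl⟩ := hF
        rw [happ, happ]
        calc dist (h x) (h y) ≤ L * dist x y := hh.2 x y
        _ ≤ |L| * dist x y := mul_le_mul_of_nonneg_right (le_abs_self L) dist_nonneg
  have hcl : closure A = eH.symm '' closure (eH '' A) := by
    rw [← Homeomorph.image_closure]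
    ext h; simp
  rw [hcl]
  exact key.image eH.symm.continuous

end aux

/-- Lemma 2: the operator `T_λ = (T¹_λ, T²_λ)`, given by
`T¹_λ(v₁,v₂)(r) = ∫_r^1 (λ ∫_0^s N τ^{N-1} f(v₂(τ)) dτ)^{1/N} ds` and
`T²_λ(v₁,v₂)(r) = ∫_r^1 (λ ∫_0^s N τ^{N-1} g(v₁(τ)) dτ)^{1/N} ds`,
maps `K` into `K`, is continuous on `K`, and maps bounded subsets of `K` to
relatively compact subsets of `X`, i.e. `T_λ : K → K` is compact and continuous. -/
theorem operator_compact_continuous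
    (N : ℕ) (hN : 1 ≤ N) (f g : ℝ → ℝ)
    (hfc : ContinuousOn f (Ici 0)) (hgc : ContinuousOn g (Ici 0))
    (hfnn : ∀ x, 0 ≤ x → 0 ≤ f x) (hgnn : ∀ x, 0 ≤ x → 0 ≤ g x)
    (lam : ℝ) (hlam : 0 < lam) :
    ∃ T : XCM → XCM,
      (∀ p : XCM, ∀ r : Set.Icc (0:ℝ) 1,
        (T p).1 r =
          ∫ s in (r:ℝ)..1,
            (lam * ∫ τ in (0:ℝ)..s, (N:ℝ) * τ ^ (N - 1) * f (extCM p.2 τ)) ^ ((N:ℝ)⁻¹) ∧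
        (T p).2 r =
          ∫ s in (r:ℝ)..1,
            (lam * ∫ τ in (0:ℝ)..s, (N:ℝ) * τ ^ (N - 1) * g (extCM p.1 τ)) ^ ((N:ℝ)⁻¹)) ∧
      MapsTo T coneCM coneCM ∧
      ContinuousOn T coneCM ∧
      (∀ B ⊆ coneCM, Bornology.IsBounded B → IsCompact (closure (T '' B))) := by
  have hNpos : (0:ℝ) < N := by exact_mod_cast hN
  have he : (0:ℝ) < (N:ℝ)⁻¹ := by positivity
  set e : ℝ := (N:ℝ)⁻¹ with hedef
  refine ⟨fun p => (opCM lam he (uAux f N p.2), opCM lam he (uAux g N p.1)), ?_, ?_, ?_, ?_⟩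
  · exact fun p r => ⟨rfl, rfl⟩
  · -- maps the cone into the cone
    rintro p ⟨hp1, hp2, _, _⟩
    have hu1c : Continuous (uAux f N p.2) := uAux_cont hfc N hp2
    have hu1n : ∀ τ, 0 ≤ τ → 0 ≤ uAux f N p.2 τ := uAux_nonneg hfnn N hp2
    have hu2c : Continuous (uAux g N p.1) := uAux_cont hgc N hp1
    have hu2n : ∀ τ, 0 ≤ τ → 0 ≤ uAux g N p.1 τ := uAux_nonneg hgnn N hp1
    have hmem : ∀ (u : ℝ → ℝ), Continuous u → (∀ τ, 0 ≤ τ → 0 ≤ u τ) →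
        (∀ t : Set.Icc (0:ℝ) 1, 0 ≤ opCM lam he u t) ∧
        (∀ t : Set.Icc (0:ℝ) 1, 1/4 ≤ (t:ℝ) → (t:ℝ) ≤ 3/4 →
          (1/4) * ‖opCM lam he u‖ ≤ opCM lam he u t) := by
      intro u hu hu0
      have hnn : ∀ t : Set.Icc (0:ℝ) 1, 0 ≤ opCM lam he u t :=
        fun t => opFun_nonneg hlam.le hu0 ↑t t.2
      refine ⟨hnn, ?_⟩
      have h0mem : (0:ℝ) ∈ Icc (0:ℝ) 1 := ⟨le_rfl, zero_le_one⟩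
      have hnorm : ‖opCM lam he u‖ ≤ opFun lam e u 0 := by
        rw [ContinuousMap.norm_le _ (opFun_nonneg hlam.le hu0 0 h0mem)]
        intro x
        rw [Real.norm_eq_abs, abs_of_nonneg (hnn x)]
        exact opFun_le hlam.le he hu hu0 ↑x x.2
      intro t ht1 ht2
      calc (1/4) * ‖opCM lam he u‖ ≤ (1/4) * opFun lam e u 0 := by linarith [hnorm]
      _ ≤ opFun lam e u ↑t := opFun_quarter hlam.le he hu hu0 ↑t t.2 ht1 ht2
      _ = opCM lam he u t := rfl
    obtain ⟨h1a, h1b⟩ := hmem _ hu1c hu1n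
    obtain ⟨h2a, h2b⟩ := hmem _ hu2c hu2n
    exact ⟨h1a, h2a, h1b, h2b⟩
  · -- continuity on the cone
    have c1 : ContinuousOn (fun p : XCM => opCM lam he (uAux f N p.2)) coneCM := by
      apply (opS_contOn hlam he hfc hfnn N).comp continuous_snd.continuousOn
      exact fun p hp => hp.2.1
    have c2 : ContinuousOn (fun p : XCM => opCM lam he (uAux g N p.1)) coneCM := by
      apply (opS_contOn hlam he hgc hgnn N).comp continuous_fst.continuousOn
      exact fun p hp => hp.1
    exact c1.prodMk c2
  · -- compactness
    intro B hB hBdd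
    obtain ⟨R, hR⟩ := isBounded_iff_forall_norm_le.mp hBdd
    obtain ⟨Cf, hCf⟩ := (isCompact_Icc (a := (0:ℝ)) (b := |R|)).exists_bound_of_continuousOn
      (hfc.mono (fun x hx => hx.1))
    obtain ⟨Cg, hCg⟩ := (isCompact_Icc (a := (0:ℝ)) (b := |R|)).exists_bound_of_continuousOn
      (hgc.mono (fun x hx => hx.1))
    set Lf : ℝ := (lam * (N * Cf)) ^ e with hLf
    set Lg : ℝ := (lam * (N * Cg)) ^ e with hLg
    set A1 : Set C(Set.Icc (0:ℝ) 1, ℝ) := {h |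
      (∀ x, ‖h x‖ ≤ Lf) ∧ ∀ x y, dist (h x) (h y) ≤ Lf * dist x y} with hA1
    set A2 : Set C(Set.Icc (0:ℝ) 1, ℝ) := {h |
      (∀ x, ‖h x‖ ≤ Lg) ∧ ∀ x y, dist (h x) (h y) ≤ Lg * dist x y} with hA2
    have hcomp : ∀ (F : ℝ → ℝ) (CF : ℝ), ContinuousOn F (Ici 0) →
        (∀ x, 0 ≤ x → 0 ≤ F x) → (∀ x ∈ Icc (0:ℝ) (|R|), ‖F x‖ ≤ CF) →
        ∀ (v : C(Set.Icc (0:ℝ) 1, ℝ)), (∀ t, 0 ≤ v t) → ‖v‖ ≤ R →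
        (∀ x, ‖opCM lam he (uAux F N v) x‖ ≤ (lam * (N * CF)) ^ e) ∧
        (∀ x y, dist (opCM lam he (uAux F N v) x) (opCM lam he (uAux F N v) y)
          ≤ (lam * (N * CF)) ^ e * dist x y) := by
      intro F CF hFc hF0 hCFb v hv hvR
      have hvM : ∀ τ, extCM v τ ∈ Icc (0:ℝ) (|R|) := by
        intro τ
        exact ⟨hv _, le_trans (le_trans (le_abs_self _) (extCM_abs_le v τ))
          (le_trans hvR (le_abs_self R))⟩
      have hD : ∀ τ ∈ Icc (0:ℝ) 1, uAux F N v τ ≤ N * CF := fun τ hτ =>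
        le_trans (le_abs_self _) (uAux_bound N hCFb hvM τ hτ)
      obtain ⟨hb1, hb2⟩ := opFun_bounds hlam.le he (uAux_cont hFc N hv)
        (uAux_nonneg hF0 N hv) hD
      constructor
      · intro x
        rw [Real.norm_eq_abs]
        exact hb1 ↑x x.2
      · intro x y
        have := hb2 ↑x x.2 ↑y y.2
        rw [Real.dist_eq, Subtype.dist_eq, Real.dist_eq]
        exact this
    have hsub : (fun p : XCM => (opCM lam he (uAux f N p.2), opCM lam he (uAux g N p.1)))
        '' B ⊆ A1 ×ˢ A2 := by
      rintro _ ⟨p, hpB, rfl⟩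
      obtain ⟨hp1, hp2, _, _⟩ := hB hpB
      constructor
      · exact hcomp f Cf hfc hfnn hCf p.2 hp2 (le_trans (norm_snd_le p) (hR p hpB))
      · exact hcomp g Cg hgc hgnn hCg p.1 hp1 (le_trans (norm_fst_le p) (hR p hpB))
    have hc1 : IsCompact (closure A1) := isCompact_closure_lipset Lf Lf
    have hc2 : IsCompact (closure A2) := isCompact_closure_lipset Lg Lg
    apply IsCompact.of_isClosed_subset (hc1.prod hc2) isClosed_closure
    calc closure ((fun p : XCM =>
          (opCM lam he (uAux f N p.2), opCM lam he (uAux g N p.1))) '' B)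
        ⊆ closure (A1 ×ˢ A2) := closure_mono hsub
    _ = closure A1 ×ˢ closure A2 := closure_prod_eq
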